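/- Let Q_n be the monic orthogonal polynomials satisfying x·Q_n(x) = Q_{n+1}(x) + n²·Q_{n-1}(x), Q_{-1}=0, Q_0=1. Then the 2n-th moment of the orthogonalizing measure equals the Euler number E_{2n} (with positive sign), i.e., the moments are 1, 0, 1, 0, 5, 0, 61, 0, 1385, .... -/

import Mathlib

open Real

/-- Coefficients of `J^k e_0` in the tridiagonal (Jacobi) model with zero diagonal and
`γ_{n-1} = n²`: `jacVec k n` is the coefficient of `e_n` in `G^k e_0`, where
`G e_n = e_{n+1} + n² e_{n-1}`. -/
def jacVec : ℕ → ℕ → ℝ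
  | 0 => fun n => if n = 0 then 1 else 0
  | (k + 1) => fun n =>
      (if n = 0 then 0 else jacVec k (n - 1)) + ((n + 1 : ℕ) : ℝ) ^ 2 * jacVec k (n + 1)

/-- The `k`-th moment `⟨e_0, J^k e_0⟩` of the measure orthogonalizing the monic
polynomials with `x Q_n = Q_{n+1} + n² Q_{n-1}`. -/
def jacMoment (k : ℕ) : ℝ := jacVec k 0

open Real
open scoped NNReal ENNReal

noncomputable def fJ (n : ℕ) : ℝ → ℝ := fun x => (n.factorial : ℝ)⁻¹ * Real.tan x ^ n * (Real.cos x)⁻¹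

def sJ : Set ℝ := {x : ℝ | Real.cos x ≠ 0}

lemma sJ_open : IsOpen sJ := isOpen_ne.preimage Real.continuous_cos

lemma zero_mem_sJ : (0 : ℝ) ∈ sJ := by simp [sJ]

lemma fJ_contDiffOn (n : ℕ) : ContDiffOn ℝ ⊤ (fJ n) sJ := by
  intro x hx
  exact (((contDiffAt_const (c := ((n.factorial : ℝ)⁻¹))).mul
    ((Real.contDiffAt_tan.2 hx).pow n)).mul
    ((Real.contDiff_cos.contDiffAt).inv hx)).contDiffWithinAt

lemma fJ_hasDerivAt (n : ℕ) {x : ℝ} (hx : Real.cos x ≠ 0) :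
    HasDerivAt (fJ n)
      ((if n = 0 then 0 else fJ (n-1) x) + ((n + 1 : ℕ) : ℝ)^2 * fJ (n+1) x) x := by
  have hsc := Real.sin_sq_add_cos_sq x
  have ht : Real.tan x = Real.sin x / Real.cos x := Real.tan_eq_sin_div_cos x
  have hcos : HasDerivAt (fun y => (Real.cos y)⁻¹) (Real.sin x / Real.cos x ^ 2) x := by
    have := (Real.hasDerivAt_cos x).inv hx
    convert this using 1
    · rfl
    · rfl
    · rfl
    · ring
  have htan := Real.hasDerivAt_tan hx
  have h := (((htan.pow n).const_mul ((n.factorial : ℝ)⁻¹)).mul hcos)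
  have h2 : HasDerivAt (fJ n)
      ((n.factorial : ℝ)⁻¹ * (↑n * Real.tan x ^ (n - 1) * (1 / Real.cos x ^ 2)) * (Real.cos x)⁻¹
        + (n.factorial : ℝ)⁻¹ * Real.tan x ^ n * (Real.sin x / Real.cos x ^ 2)) x := by
    exact h
  have hc2 : 1 / Real.cos x ^ 2 = 1 + Real.tan x ^ 2 := by
    rw [← Real.inv_one_add_tan_sq hx, one_div, inv_inv]
  have hs2 : Real.sin x / Real.cos x ^ 2 = Real.tan x * (Real.cos x)⁻¹ := by
    rw [ht]; ring
  convert h2 using 1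
  rw [hc2, hs2]
  rcases n with _ | m
  · simp [fJ]
  · have hfac : ((m+1).factorial : ℝ) = (m+1) * (m.factorial : ℝ) := by
      push_cast [Nat.factorial_succ]; ring
    have hfac2 : ((m+2).factorial : ℝ) = (m+2) * (m+1) * (m.factorial : ℝ) := by
      push_cast [Nat.factorial_succ]; ring
    have hm : (m.factorial : ℝ) ≠ 0 := Nat.cast_ne_zero.2 m.factorial_ne_zero
    simp only [fJ, if_neg (Nat.succ_ne_zero m), Nat.add_sub_cancel]
    rw [hfac, hfac2]
    push_cast
    have hm1 : (m:ℝ) + 1 ≠ 0 := by positivity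
    have hm2 : (m:ℝ) + 2 ≠ 0 := by positivity
    field_simp
    ring

lemma sJ_unique : UniqueDiffOn ℝ sJ := sJ_open.uniqueDiffOn

lemma derivWithin_fJ (n : ℕ) {x : ℝ} (hx : x ∈ sJ) :
    derivWithin (fJ n) sJ x
      = (if n = 0 then 0 else fJ (n-1) x) + ((n + 1 : ℕ) : ℝ)^2 * fJ (n+1) x := by
  rw [derivWithin_of_isOpen sJ_open hx]
  exact (fJ_hasDerivAt n hx).deriv

lemma key (k : ℕ) : ∀ n, iteratedDerivWithin k (fJ n) sJ 0 = jacVec k n := by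
  induction k with
  | zero =>
    intro n
    rw [iteratedDerivWithin_zero]
    rcases n with _ | m
    · simp [fJ, jacVec]
    · simp [fJ, jacVec, Real.tan_zero, zero_pow (Nat.succ_ne_zero m)]
  | succ k ih =>
    intro n
    rw [iteratedDerivWithin_succ']
    have hcongr : Set.EqOn (derivWithin (fJ n) sJ)
        (fun x => (if n = 0 then 0 else fJ (n-1) x) + ((n + 1 : ℕ) : ℝ)^2 * fJ (n+1) x) sJ :=
      fun x hx => derivWithin_fJ n hx
    rw [iteratedDerivWithin_congr hcongr zero_mem_sJ]
    rcases n with _ | m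
    · have e : (fun x => (if 0 = 0 then (0:ℝ) else fJ (0-1) x) + ((0 + 1 : ℕ) : ℝ)^2 * fJ (0+1) x)
          = (fun x => ((0 + 1 : ℕ) : ℝ)^2 * fJ 1 x) := by
        funext x; simp
      rw [e, iteratedDerivWithin_const_mul zero_mem_sJ sJ_unique _
        ((fJ_contDiffOn 1).of_le le_top 0 zero_mem_sJ), ih 1]
      simp [jacVec]
    · have e : (fun x => (if m + 1 = 0 then (0:ℝ) else fJ (m+1-1) x)
            + ((m + 1 + 1 : ℕ) : ℝ)^2 * fJ (m+1+1) x)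
          = fJ m + (fun x => ((m + 2 : ℕ) : ℝ)^2 * fJ (m+2) x) := by
        funext x; simp [Pi.add_apply]; left; ring
      rw [e, iteratedDerivWithin_add zero_mem_sJ sJ_unique ((fJ_contDiffOn m).of_le le_top 0 zero_mem_sJ)
          ((contDiffOn_const.mul ((fJ_contDiffOn (m+2)).of_le le_top)) 0 zero_mem_sJ),
        iteratedDerivWithin_const_mul zero_mem_sJ sJ_unique _
          ((fJ_contDiffOn (m+2)).of_le le_top 0 zero_mem_sJ),
        ih m, ih (m+2)]
      simp only [jacVec, if_neg (Nat.succ_ne_zero m), Nat.add_sub_cancel]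

lemma idw_eq (f : ℝ → ℝ) (k : ℕ) : iteratedDeriv k f 0 = iteratedDerivWithin k f sJ 0 := by
  rw [iteratedDeriv_eq_iteratedFDeriv]
  show _ = (iteratedFDerivWithin ℝ k f sJ 0 : (Fin k → ℝ) → ℝ) (fun _ => 1)
  rw [iteratedFDerivWithin_of_isOpen k sJ_open zero_mem_sJ]

lemma iteratedDeriv_sec (k : ℕ) :
    iteratedDeriv k (fun x : ℝ => (Real.cos x)⁻¹) 0 = jacVec k 0 := by
  have hfJ : (fun x : ℝ => (Real.cos x)⁻¹) = fJ 0 := by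
    funext x; simp [fJ]
  rw [hfJ, idw_eq, key]

theorem jac_aux (E : ℕ → ℝ)
    (hE : ∀ x : ℝ, |x| < π / 2 →
      HasSum (fun n : ℕ => E n * x ^ (2 * n) / ((2 * n).factorial : ℝ)) (1 / Real.cos x)) :
    (∀ n : ℕ, jacVec (2 * n) 0 = E n) ∧ (∀ n : ℕ, jacVec (2 * n + 1) 0 = 0) := by
  set a : ℕ → ℝ := fun k => if 2 ∣ k then E (k / 2) / (k.factorial : ℝ) else 0 with ha
  have hsum : ∀ y : ℝ, |y| < π / 2 → HasSum (fun k => a k * y ^ k) ((Real.cos y)⁻¹) := by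
    intro y hy
    have h2 : Function.Injective (fun n : ℕ => 2 * n) := fun m n h => by simpa using h
    have h0 : ∀ k, k ∉ Set.range (fun n : ℕ => 2 * n) → a k * y ^ k = 0 := by
      intro k hk
      have : ¬ 2 ∣ k := by
        rintro ⟨c, rfl⟩; exact hk ⟨c, rfl⟩
      simp [ha, this]
    rw [← Function.Injective.hasSum_iff h2 h0]
    have h := hE y hy
    rw [one_div] at h
    convert h using 2 with n
    have hd : (2:ℕ) ∣ 2 * n := ⟨n, rfl⟩
    simp only [Function.comp_apply, ha, if_pos hd,
      Nat.mul_div_cancel_left n (by norm_num : 0 < 2)]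
    ring
  have hcoeff : ∀ k, (FormalMultilinearSeries.ofScalars ℝ a).coeff k = a k := by
    intro k
    show (FormalMultilinearSeries.ofScalars ℝ a) k (fun _ => (1:ℝ)) = a k
    rw [FormalMultilinearSeries.ofScalars_apply_eq]
    simp
  have hpi1 : (1:ℝ) < π / 2 := by
    have := Real.pi_gt_three; linarith
  have h1sum : Summable a := by
    have := (hsum 1 (by rw [abs_one]; exact hpi1)).summable
    simpa using this
  set q := FormalMultilinearSeries.ofScalars ℝ a with hqdef
  have hq : HasFPowerSeriesOnBall (fun x : ℝ => (Real.cos x)⁻¹) q 0 1 := by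
    refine ⟨?_, one_pos, ?_⟩
    · apply FormalMultilinearSeries.le_radius_of_summable (r := 1)
      have : ∀ n, ‖q n‖ * (1:ℝ≥0) ^ n = |a n| := by
        intro n
        rw [hqdef, FormalMultilinearSeries.ofScalars_norm]
        simp [Real.norm_eq_abs]
      rw [show (fun n => ‖q n‖ * ((1:ℝ≥0):ℝ) ^ n) = fun n => |a n| from funext this]
      exact h1sum.abs
    · intro y hy
      simp only [EMetric.mem_ball, edist_zero_right] at hy
      have hy1 : |y| < 1 := by
        rw [← Real.norm_eq_abs, ← ENNReal.coe_one] at *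
        exact_mod_cast hy
      have hy' : |y| < π / 2 := hy1.trans hpi1
      have := hsum y hy'
      simp only [zero_add]
      convert this using 2 with k
      · rfl
      rw [FormalMultilinearSeries.ofScalars_apply_eq, smul_eq_mul]
  have coeff : ∀ k, jacVec k 0 = (k.factorial : ℝ) * a k := by
    intro k
    have h1 := hq.factorial_smul (1:ℝ) k
    rw [← iteratedDeriv_eq_iteratedFDeriv, iteratedDeriv_sec] at h1
    rw [← h1, show ((q k) fun _ => (1:ℝ)) = q.coeff k from rfl, hqdef, hcoeff k, nsmul_eq_mul]
  constructor
  · intro n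
    have hd : (2:ℕ) ∣ 2 * n := ⟨n, rfl⟩
    rw [coeff (2*n)]
    simp only [ha, if_pos hd, Nat.mul_div_cancel_left n (by norm_num : 0 < 2)]
    field_simp
  · intro n
    have hd : ¬ (2:ℕ) ∣ 2 * n + 1 := by omega
    rw [coeff (2*n+1)]
    simp [ha, hd]


/-- The moments of the measure orthogonalizing the monic polynomials
`x·Q_n = Q_{n+1} + n²·Q_{n-1}` are the Euler (secant) numbers:
the `2n`-th moment equals `E_{2n}` (defined by `sec x = ∑ E_{2n} x^{2n}/(2n)!`)
and the odd moments vanish; so they are `1, 0, 1, 0, 5, 0, 61, 0, 1385, …`. -/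
theorem moments_of_n_squared_jacobi_are_euler (E : ℕ → ℝ)
    (hE : ∀ x : ℝ, |x| < π / 2 →
      HasSum (fun n : ℕ => E n * x ^ (2 * n) / ((2 * n).factorial : ℝ)) (1 / Real.cos x)) :
    (∀ n : ℕ, jacMoment (2 * n) = E n) ∧ (∀ n : ℕ, jacMoment (2 * n + 1) = 0) := by
  obtain ⟨h1, h2⟩ := jac_aux E hE
  exact ⟨fun n => h1 n, fun n => h2 n⟩
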